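/- Let r > 2/3 and u ∈ (6/5, 4/3) with K(u;r) = 0, and set q = (2 − u)/(2(u − 1)). Then 1 < q < 2, g(q,u) = 0, f(q,u;r) = 0, r + u − 2 > 0, and q = 1 + √((r + u − 2)/(r + 1/10)). In particular (q, 0, u) is an equilibrium of the traveling-wave system lying on the right branch of the parabola {(q,0,u) : u = 2 − r + (r + 1/10)(q − 1)^2}. -/

import Mathlib

noncomputable section

/-- Reaction term `f(q,u;r)` of the pipe-flow model. -/
def fq (q u r : ℝ) : ℝ := q * (r + u - 2 - (r + 1/10) * (q - 1)^2)

/-- Reaction term `g(q,u)` of the pipe-flow model. -/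
def gq (q u : ℝ) : ℝ := 2 - u + 2*q*(1 - u)

/-- The cubic `K(u;r)`. -/
def Kc (u r : ℝ) : ℝ := 40*u^3 - (50*r + 169)*u^2 + (160*r + 224)*u - 120*r - 96

theorem stmt1 (r u : ℝ) (hr : 2/3 < r) (hu : u ∈ Set.Ioo (6/5 : ℝ) (4/3))
    (hK : Kc u r = 0) :
    let q := (2 - u) / (2 * (u - 1))
    1 < q ∧ q < 2 ∧ gq q u = 0 ∧ fq q u r = 0 ∧ 0 < r + u - 2 ∧
    q = 1 + Real.sqrt ((r + u - 2) / (r + 1/10)) ∧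
    u = 2 - r + (r + 1/10) * (q - 1)^2 := by
  obtain ⟨hu1, hu2⟩ := hu
  intro q
  have hd : (0:ℝ) < 2 * (u - 1) := by linarith
  have hq1 : 1 < q := by
    rw [lt_div_iff₀ hd]; linarith
  have hq2 : q < 2 := by
    rw [div_lt_iff₀ hd]; linarith
  have hg : gq q u = 0 := by
    unfold gq
    simp only [q]
    field_simp [show u - 1 ≠ 0 by linarith]
    ring
  -- key identity: u = 2 - r + (r+1/10)(q-1)^2
  have hkey : u = 2 - r + (r + 1/10) * (q - 1)^2 := by
    have hq : q - 1 = (4 - 3*u) / (2 * (u - 1)) := by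
      simp only [q]; field_simp [show u - 1 ≠ 0 by linarith]; ring
    have hd' : (2 * (u - 1)) ≠ 0 := ne_of_gt hd
    rw [hq]
    unfold Kc at hK
    field_simp [show u - 1 ≠ 0 by linarith]
    nlinarith [hK, sq_nonneg (u-1)]
  have hpos : 0 < r + u - 2 := by
    have h1 : 0 < (r + 1/10) * (q - 1)^2 := by
      exact mul_pos (by linarith) (pow_pos (by linarith) 2)
    nlinarith [h1]
  have hf : fq q u r = 0 := by
    unfold fq
    nlinarith [hkey]
  refine ⟨hq1, hq2, hg, hf, hpos, ?_, hkey⟩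
  have : (r + u - 2) / (r + 1/10) = (q - 1)^2 := by
    rw [div_eq_iff (by linarith : r + 1/10 ≠ 0)]
    nlinarith [hkey]
  rw [this, Real.sqrt_sq (by linarith : 0 ≤ q - 1)]
  ring
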